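/- arXiv:0804.3012 — 6 statements merged into one kernel-verified Lean document; each statement's English description precedes it below -/
import Mathlib

section
/- Let g : [0,σ] → [0,∞) be continuous with g(0) = g(σ) = 0, let T_g = [0,σ]/∼_g be the quotient by the relation s ∼_g t iff d_g(s,t) = 0, equipped with the induced metric d_g, and let p_g : [0,σ] → T_g be the canonical projection. Then for 0 ≤ s < t ≤ σ, p_g(s) ≺ p_g(t) (i.e. p_g(s) lies on the segment from the root p_g(0) to p_g(t)) if and only if g(s) = m_g(s,t). -/
/-- for `0 ≤ s < t ≤ σ`, `p_g(s) ≺ p_g(t)` (expressed through the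
pseudo-metric `d_g` as `d_g(0,t) = d_g(0,s) + d_g(s,t)`) iff `g s = m_g(s,t)`. -/
theorem stmt3 (σ : ℝ) (hσ : 0 < σ) (g : ℝ → ℝ)
    (hg : ContinuousOn g (Set.Icc 0 σ))
    (hnonneg : ∀ x ∈ Set.Icc (0:ℝ) σ, 0 ≤ g x)
    (h0 : g 0 = 0) (h1 : g σ = 0)
    (m : ℝ → ℝ → ℝ)
    (hm : ∀ s t : ℝ, m s t = sInf (g '' Set.Icc (min s t) (max s t)))
    (d : ℝ → ℝ → ℝ)
    (hd : ∀ s t : ℝ, d s t = g s + g t - 2 * m s t)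
    (s t : ℝ) (hs : 0 ≤ s) (hst : s < t) (ht : t ≤ σ) :
    d 0 t = d 0 s + d s t ↔ g s = m s t := by
  have hm0 : ∀ u : ℝ, 0 ≤ u → u ≤ σ → m 0 u = 0 := by
    intro u hu huσ
    rw [hm, min_eq_left hu, max_eq_right hu]
    apply le_antisymm
    · exact csInf_le ⟨0, by rintro _ ⟨x, hx, rfl⟩; exact hnonneg x ⟨hx.1, hx.2.trans huσ⟩⟩
        ⟨0, ⟨le_refl 0, hu⟩, h0⟩
    · exact le_csInf ⟨g 0, 0, ⟨le_refl 0, hu⟩, rfl⟩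
        (by rintro _ ⟨x, hx, rfl⟩; exact hnonneg x ⟨hx.1, hx.2.trans huσ⟩)
  have hs0 := hm0 s hs (hst.le.trans ht)
  have ht0 := hm0 t (hs.trans hst.le) ht
  rw [hd, hd, hd, hs0, ht0, h0]
  constructor <;> intro h <;> linarith
end

section
/- Let g : [0,σ] → [0,∞) be continuous with g(0) = g(σ) = 0 and let 0 ≤ s < t ≤ σ. Then the segment [p_g(s), p_g(t)] in the tree T_g is contained in p_g([s,t]), and p_g(s) △ p_g(t) = p_g(r) for any r ∈ [s,t] achieving g(r) = m_g(s,t). -/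
/-- First hitting: if `g s ≥ c` and `g` dips to `≤ c` somewhere on `[s,t]`, there is
a first point `r` where `g r = c`, with `g ≥ c` on `[s,r]`. -/
lemma hit_left (g : ℝ → ℝ) (s t c : ℝ)
    (hc : ContinuousOn g (Set.Icc s t)) (hsc : c ≤ g s)
    (hex : ∃ u ∈ Set.Icc s t, g u ≤ c) :
    ∃ r ∈ Set.Icc s t, g r = c ∧ ∀ u ∈ Set.Icc s r, c ≤ g u := by
  set A : Set ℝ := Set.Icc s t ∩ g ⁻¹' Set.Iic c with hA
  have hAclosed : IsClosed A :=
    ContinuousOn.preimage_isClosed_of_isClosed hc isClosed_Icc isClosed_Iic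
  obtain ⟨u0, hu0, hu0c⟩ := hex
  have hAne : A.Nonempty := ⟨u0, hu0, hu0c⟩
  have hAbdd : BddBelow A := ⟨s, fun y hy => hy.1.1⟩
  set r := sInf A with hr
  have hrA : r ∈ A := hAclosed.csInf_mem hAne hAbdd
  have hrs : s ≤ r := le_csInf hAne (fun y hy => hy.1.1)
  have hlt : ∀ u ∈ Set.Ico s r, c < g u := by
    intro u hu
    by_contra h
    push_neg at h
    have hmem : u ∈ A := ⟨⟨hu.1, hu.2.le.trans hrA.1.2⟩, h⟩
    exact absurd (csInf_le hAbdd hmem) (not_le.mpr hu.2)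
  have hgr : c ≤ g r := by
    rcases eq_or_lt_of_le hrs with h | h
    · rwa [← h]
    · have hB : IsClosed (Set.Icc s t ∩ g ⁻¹' Set.Ici c) :=
        ContinuousOn.preimage_isClosed_of_isClosed hc isClosed_Icc isClosed_Ici
      have hsub : Set.Ico s r ⊆ Set.Icc s t ∩ g ⁻¹' Set.Ici c := by
        intro u hu
        exact ⟨⟨hu.1, hu.2.le.trans hrA.1.2⟩, (hlt u hu).le⟩
      have h1 : r ∈ closure (Set.Ico s r) := by
        rw [closure_Ico h.ne]
        exact ⟨hrs, le_refl r⟩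
      have : r ∈ Set.Icc s t ∩ g ⁻¹' Set.Ici c :=
        (IsClosed.closure_subset_iff hB).mpr hsub h1
      exact this.2
  refine ⟨r, hrA.1, le_antisymm hrA.2 hgr, ?_⟩
  intro u hu
  rcases eq_or_lt_of_le hu.2 with h | h
  · rw [h]; exact hgr
  · exact (hlt u ⟨hu.1, h⟩).le

/-- Last hitting: if `g t ≥ c` and `g` dips to `≤ c` somewhere on `[s,t]`, there is
a last point `r` where `g r = c`, with `g ≥ c` on `[r,t]`. -/
lemma hit_right (g : ℝ → ℝ) (s t c : ℝ)
    (hc : ContinuousOn g (Set.Icc s t)) (htc : c ≤ g t)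
    (hex : ∃ u ∈ Set.Icc s t, g u ≤ c) :
    ∃ r ∈ Set.Icc s t, g r = c ∧ ∀ u ∈ Set.Icc r t, c ≤ g u := by
  set A : Set ℝ := Set.Icc s t ∩ g ⁻¹' Set.Iic c with hA
  have hAclosed : IsClosed A :=
    ContinuousOn.preimage_isClosed_of_isClosed hc isClosed_Icc isClosed_Iic
  obtain ⟨u0, hu0, hu0c⟩ := hex
  have hAne : A.Nonempty := ⟨u0, hu0, hu0c⟩
  have hAbdd : BddAbove A := ⟨t, fun y hy => hy.1.2⟩
  set r := sSup A with hr
  have hrA : r ∈ A := hAclosed.csSup_mem hAne hAbdd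
  have hrt : r ≤ t := csSup_le hAne (fun y hy => hy.1.2)
  have hlt : ∀ u ∈ Set.Ioc r t, c < g u := by
    intro u hu
    by_contra h
    push_neg at h
    have hmem : u ∈ A := ⟨⟨hrA.1.1.trans hu.1.le, hu.2⟩, h⟩
    exact absurd (le_csSup hAbdd hmem) (not_le.mpr hu.1)
  have hgr : c ≤ g r := by
    rcases eq_or_lt_of_le hrt with h | h
    · rwa [h]
    · have hB : IsClosed (Set.Icc s t ∩ g ⁻¹' Set.Ici c) :=
        ContinuousOn.preimage_isClosed_of_isClosed hc isClosed_Icc isClosed_Ici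
      have hsub : Set.Ioc r t ⊆ Set.Icc s t ∩ g ⁻¹' Set.Ici c := by
        intro u hu
        exact ⟨⟨hrA.1.1.trans hu.1.le, hu.2⟩, (hlt u hu).le⟩
      have h1 : r ∈ closure (Set.Ioc r t) := by
        rw [closure_Ioc h.ne]
        exact ⟨le_refl r, hrt⟩
      have : r ∈ Set.Icc s t ∩ g ⁻¹' Set.Ici c :=
        (IsClosed.closure_subset_iff hB).mpr hsub h1
      exact this.2
  refine ⟨r, hrA.1, le_antisymm hrA.2 hgr, ?_⟩
  intro u hu
  rcases eq_or_lt_of_le hu.1 with h | h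
  · rw [← h]; exact hgr
  · exact (hlt u ⟨h, hu.2⟩).le

/-- for `0 ≤ s < t ≤ σ`, the segment `[p_g(s), p_g(t)]` is contained in
`p_g([s,t])` (any point on the segment, i.e. any class `x` with
`d(s,x) + d(x,t) = d(s,t)`, is equivalent to some `r ∈ [s,t]`), and for any
`r ∈ [s,t]` with `g r = m_g(s,t)`, the class of `r` is the most recent common
ancestor `p_g(s) △ p_g(t)`: it is an ancestor of both `p_g(s)` and `p_g(t)` and
lies at height `m_g(s,t)`. -/
theorem stmt5 (σ : ℝ) (hσ : 0 < σ) (g : ℝ → ℝ)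
    (hg : ContinuousOn g (Set.Icc 0 σ))
    (hnonneg : ∀ x ∈ Set.Icc (0:ℝ) σ, 0 ≤ g x)
    (h0 : g 0 = 0) (h1 : g σ = 0)
    (m : ℝ → ℝ → ℝ)
    (hm : ∀ s t : ℝ, m s t = sInf (g '' Set.Icc (min s t) (max s t)))
    (d : ℝ → ℝ → ℝ)
    (hd : ∀ s t : ℝ, d s t = g s + g t - 2 * m s t)
    (s t : ℝ) (hs : 0 ≤ s) (hst : s < t) (ht : t ≤ σ) :
    (∀ x ∈ Set.Icc (0:ℝ) σ, d s x + d x t = d s t → ∃ r ∈ Set.Icc s t, d x r = 0) ∧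
    (∀ r ∈ Set.Icc s t, g r = m s t →
      d 0 r = m s t ∧ d 0 s = d 0 r + d r s ∧ d 0 t = d 0 r + d r t) := by
  have hstle : s ≤ t := hst.le
  -- m a b is a lower bound of g on [a,b]
  have hax : ∀ a b : ℝ, a ≤ b → 0 ≤ a → b ≤ σ → ∀ u ∈ Set.Icc a b, m a b ≤ g u := by
    intro a b hab ha hb u hu
    rw [hm, min_eq_left hab, max_eq_right hab]
    refine csInf_le ⟨0, ?_⟩ ⟨u, hu, rfl⟩
    rintro y ⟨v, hv, rfl⟩
    exact hnonneg v (Set.Icc_subset_Icc ha hb hv)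
  -- any lower bound of g on [a,b] is ≤ m a b
  have hge : ∀ a b c : ℝ, a ≤ b → (∀ u ∈ Set.Icc a b, c ≤ g u) → c ≤ m a b := by
    intro a b c hab h
    rw [hm, min_eq_left hab, max_eq_right hab]
    refine le_csInf ⟨g a, a, Set.left_mem_Icc.mpr hab, rfl⟩ ?_
    rintro y ⟨v, hv, rfl⟩
    exact h v hv
  -- the infimum is attained
  have hatt : ∀ a b : ℝ, a ≤ b → 0 ≤ a → b ≤ σ → ∃ r ∈ Set.Icc a b, g r = m a b := by
    intro a b hab ha hb
    obtain ⟨r, hr, hmin⟩ := isCompact_Icc.exists_isMinOn (Set.nonempty_Icc.mpr hab)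
      (hg.mono (Set.Icc_subset_Icc ha hb))
    exact ⟨r, hr, le_antisymm (hge a b (g r) hab (fun u hu => hmin hu))
      (hax a b hab ha hb r hr)⟩
  have hsymm : ∀ a b : ℝ, m a b = m b a := by
    intro a b
    rw [hm, hm, min_comm, max_comm]
  constructor
  · -- Part 1: segment is contained in p_g([s,t])
    intro x hx hxeq
    rcases le_or_gt s x with hsx | hxs
    · rcases le_or_gt x t with hxt | htx
      · -- x ∈ [s,t] : take r = x
        refine ⟨x, ⟨hsx, hxt⟩, ?_⟩
        have hmxx : m x x = g x :=
          le_antisymm (hax x x le_rfl hx.1 hx.2 x ⟨le_rfl, le_rfl⟩)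
            (hge x x (g x) le_rfl (fun u hu => by rw [le_antisymm hu.2 hu.1]))
        rw [hd, hmxx]; ring
      · -- t < x
        have htx' : t ≤ x := htx.le
        have ht0 : (0:ℝ) ≤ t := hs.trans hstle
        -- splitting of m s x
        have hmin1 : m s x ≤ m t x := by
          obtain ⟨r', hr', hgr'⟩ := hatt t x htx' ht0 hx.2
          calc m s x ≤ g r' := hax s x (hstle.trans htx') hs hx.2 r'
                ⟨hstle.trans hr'.1, hr'.2⟩
            _ = m t x := hgr'
        have hmin2 : m s x ≤ m s t := by
          obtain ⟨r', hr', hgr'⟩ := hatt s t hstle hs ht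
          calc m s x ≤ g r' := hax s x (hstle.trans htx') hs hx.2 r'
                ⟨hr'.1, hr'.2.trans htx'⟩
            _ = m s t := hgr'
        have hmin3 : min (m s t) (m t x) ≤ m s x := by
          refine hge s x _ (hstle.trans htx') ?_
          intro u hu
          rcases le_or_gt u t with h | h
          · exact le_trans (min_le_left _ _) (hax s t hstle hs ht u ⟨hu.1, h⟩)
          · exact le_trans (min_le_right _ _) (hax t x htx' ht0 hx.2 u ⟨h.le, hu.2⟩)
        have heq : m s x = min (m s t) (m t x) := le_antisymm (le_min hmin2 hmin1) hmin3
        have hmxt : m x t = m t x := hsymm x t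
        rw [hd s x, hd x t, hd s t] at hxeq
        have hgxtx : m t x ≤ g x := hax t x htx' ht0 hx.2 x ⟨htx', le_rfl⟩
        rcases le_or_gt (m t x) (m s t) with h1 | h1
        · -- m t x ≤ m s t : x is equivalent to the minimum point
          have heq' : m s x = m t x := by rw [heq, min_eq_right h1]
          have hgx : g x = 2 * m t x - m s t := by
            rw [heq', hmxt] at hxeq; linarith
          have hme : m t x = m s t := le_antisymm h1 (by linarith)
          have hgx' : g x = m s t := by rw [hgx, hme]; ring
          obtain ⟨r, hrst, hgr⟩ := hatt s t hstle hs ht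
          refine ⟨r, hrst, ?_⟩
          have hrx : r ≤ x := hrst.2.trans htx'
          have hmrx : m r x = m s t := by
            apply le_antisymm
            · calc m r x ≤ g r := hax r x hrx (hs.trans hrst.1) hx.2 r ⟨le_rfl, hrx⟩
                _ = m s t := hgr
            · refine hge r x _ hrx ?_
              intro u hu
              rcases le_or_gt u t with h | h
              · exact hax s t hstle hs ht u ⟨hrst.1.trans hu.1, h⟩
              · calc m s t = m t x := hme.symm
                  _ ≤ g u := hax t x htx' ht0 hx.2 u ⟨h.le, hu.2⟩
          have hmxr : m x r = m s t := by rw [hsymm x r, hmrx]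
          rw [hd, hmxr, hgr, hgx']; ring
        · -- m s t < m t x : x is an ancestor of t at height g x = m t x
          have heq' : m s x = m s t := by rw [heq, min_eq_left h1.le]
          have hgx : g x = m t x := by rw [heq', hmxt] at hxeq; linarith
          have hgtc : g x ≤ g t := by
            rw [hgx]; exact hax t x htx' ht0 hx.2 t ⟨le_rfl, htx'⟩
          obtain ⟨r0, hr0, hgr0⟩ := hatt s t hstle hs ht
          have hex : ∃ u ∈ Set.Icc s t, g u ≤ g x :=
            ⟨r0, hr0, by rw [hgr0, hgx]; exact h1.le⟩
          obtain ⟨r, hrst, hgr, hbig⟩ :=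
            hit_right g s t (g x) (hg.mono (Set.Icc_subset_Icc hs ht)) hgtc hex
          refine ⟨r, hrst, ?_⟩
          have hrx : r ≤ x := hrst.2.trans htx'
          have hmrx : m r x = g x := by
            apply le_antisymm
            · exact hax r x hrx (hs.trans hrst.1) hx.2 x ⟨hrx, le_rfl⟩
            · refine hge r x _ hrx ?_
              intro u hu
              rcases le_or_gt u t with h | h
              · exact hbig u ⟨hu.1, h⟩
              · rw [hgx]; exact hax t x htx' ht0 hx.2 u ⟨h.le, hu.2⟩
          have hmxr : m x r = g x := by rw [hsymm x r, hmrx]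
          rw [hd, hmxr, hgr]; ring
    · -- x < s
      have hxs' : x ≤ s := hxs.le
      have hsσ : s ≤ σ := hstle.trans ht
      -- splitting of m x t
      have hmin1 : m x t ≤ m x s := by
        obtain ⟨r', hr', hgr'⟩ := hatt x s hxs' hx.1 hsσ
        calc m x t ≤ g r' := hax x t (hxs'.trans hstle) hx.1 ht r'
              ⟨hr'.1, hr'.2.trans hstle⟩
          _ = m x s := hgr'
      have hmin2 : m x t ≤ m s t := by
        obtain ⟨r', hr', hgr'⟩ := hatt s t hstle hs ht
        calc m x t ≤ g r' := hax x t (hxs'.trans hstle) hx.1 ht r'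
              ⟨hxs'.trans hr'.1, hr'.2⟩
          _ = m s t := hgr'
      have hmin3 : min (m x s) (m s t) ≤ m x t := by
        refine hge x t _ (hxs'.trans hstle) ?_
        intro u hu
        rcases le_or_gt u s with h | h
        · exact le_trans (min_le_left _ _) (hax x s hxs' hx.1 hsσ u ⟨hu.1, h⟩)
        · exact le_trans (min_le_right _ _) (hax s t hstle hs ht u ⟨h.le, hu.2⟩)
      have heq : m x t = min (m x s) (m s t) := le_antisymm (le_min hmin1 hmin2) hmin3
      have hmsx : m s x = m x s := hsymm s x
      rw [hd s x, hd x t, hd s t] at hxeq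
      have hgxxs : m x s ≤ g x := hax x s hxs' hx.1 hsσ x ⟨le_rfl, hxs'⟩
      rcases le_or_gt (m x s) (m s t) with h1 | h1
      · -- m x s ≤ m s t : x is equivalent to the minimum point
        have heq' : m x t = m x s := by rw [heq, min_eq_left h1]
        have hgx : g x = 2 * m x s - m s t := by
          rw [heq', hmsx] at hxeq; linarith
        have hme : m x s = m s t := le_antisymm h1 (by linarith)
        have hgx' : g x = m s t := by rw [hgx, hme]; ring
        obtain ⟨r, hrst, hgr⟩ := hatt s t hstle hs ht
        refine ⟨r, hrst, ?_⟩
        have hxr : x ≤ r := hxs'.trans hrst.1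
        have hmxr : m x r = m s t := by
          apply le_antisymm
          · calc m x r ≤ g r := hax x r hxr hx.1 (hrst.2.trans ht) r ⟨hxr, le_rfl⟩
              _ = m s t := hgr
          · refine hge x r _ hxr ?_
            intro u hu
            rcases le_or_gt u s with h | h
            · calc m s t = m x s := hme.symm
                _ ≤ g u := hax x s hxs' hx.1 hsσ u ⟨hu.1, h⟩
            · exact hax s t hstle hs ht u ⟨h.le, hu.2.trans hrst.2⟩
        rw [hd, hmxr, hgr, hgx']; ring
      · -- m s t < m x s : x is an ancestor of s at height g x = m x s
        have heq' : m x t = m s t := by rw [heq, min_eq_right h1.le]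
        have hgx : g x = m x s := by rw [heq', hmsx] at hxeq; linarith
        have hgsc : g x ≤ g s := by
          rw [hgx]; exact hax x s hxs' hx.1 hsσ s ⟨hxs', le_rfl⟩
        obtain ⟨r0, hr0, hgr0⟩ := hatt s t hstle hs ht
        have hex : ∃ u ∈ Set.Icc s t, g u ≤ g x :=
          ⟨r0, hr0, by rw [hgr0, hgx]; exact h1.le⟩
        obtain ⟨r, hrst, hgr, hbig⟩ :=
          hit_left g s t (g x) (hg.mono (Set.Icc_subset_Icc hs ht)) hgsc hex
        refine ⟨r, hrst, ?_⟩
        have hxr : x ≤ r := hxs'.trans hrst.1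
        have hmxr : m x r = g x := by
          apply le_antisymm
          · exact hax x r hxr hx.1 (hrst.2.trans ht) x ⟨le_rfl, hxr⟩
          · refine hge x r _ hxr ?_
            intro u hu
            rcases le_or_gt u s with h | h
            · rw [hgx]; exact hax x s hxs' hx.1 hsσ u ⟨hu.1, h⟩
            · exact hbig u ⟨h.le, hu.2⟩
        rw [hd, hmxr, hgr]; ring
  · -- Part 2: the mrca
    intro r hr hgr
    have hr0 : 0 ≤ r := hs.trans hr.1
    have hrσ : r ≤ σ := hr.2.trans ht
    have hm0 : ∀ a : ℝ, 0 ≤ a → a ≤ σ → m 0 a = 0 := by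
      intro a ha haσ
      refine le_antisymm ?_ (hge 0 a 0 ha
        (fun u hu => hnonneg u (Set.Icc_subset_Icc le_rfl haσ hu)))
      calc m 0 a ≤ g 0 := hax 0 a ha le_rfl haσ 0 ⟨le_rfl, ha⟩
        _ = 0 := h0
    have hm0r : m 0 r = 0 := hm0 r hr0 hrσ
    have hm0s : m 0 s = 0 := hm0 s hs (hstle.trans ht)
    have hm0t : m 0 t = 0 := hm0 t (hs.trans hstle) ht
    have hmsr : m s r = m s t := by
      apply le_antisymm
      · calc m s r ≤ g r := hax s r hr.1 hs hrσ r ⟨hr.1, le_rfl⟩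
          _ = m s t := hgr
      · exact hge s r _ hr.1 (fun u hu => hax s t hstle hs ht u ⟨hu.1, hu.2.trans hr.2⟩)
    have hmrt : m r t = m s t := by
      apply le_antisymm
      · calc m r t ≤ g r := hax r t hr.2 hr0 ht r ⟨le_rfl, hr.2⟩
          _ = m s t := hgr
      · exact hge r t _ hr.2 (fun u hu => hax s t hstle hs ht u ⟨hr.1.trans hu.1, hu.2⟩)
    have hmrs : m r s = m s t := by rw [hsymm r s, hmsr]
    refine ⟨?_, ?_, ?_⟩
    · rw [hd, hm0r, h0]; linarith
    · rw [hd 0 s, hd 0 r, hd r s, hm0s, hm0r, hmrs, h0]; linarith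
    · rw [hd 0 t, hd 0 r, hd r t, hm0t, hm0r, hmrt, h0]; linarith
end

section
/- Let Z : [0,1] → [0,∞) be continuous and let D be a pseudo-metric on [0,1] satisfying D(0,t) = Z_t and D(s,t) ≤ Z_s + Z_t − 2 min_{[s∧t, s∨t]} Z for all s,t. Fix s ∈ [0,1] and define φ_s(t) = sup{ r ≤ s : Z_r ≤ t } for 0 ≤ t ≤ Z_s (assuming Z_0 = 0 so this is well-defined). Then Z_{φ_s(t)} = t for all t ∈ [0, Z_s], and D(φ_s(t), φ_s(t')) = t' − t for all 0 ≤ t ≤ t' ≤ Z_s. Hence t ↦ φ_s(t) projects to a geodesic from the class of 0 to the class of s in the quotient metric space. -/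
/-- the simple geodesic. With `φ_s(t) = sup{r ≤ s : Z_r ≤ t}` one has
`Z_{φ_s(t)} = t` and `D(φ_s(t), φ_s(t')) = t' - t` for `0 ≤ t ≤ t' ≤ Z_s`; hence
`t ↦ φ_s(t)` projects to a geodesic from the class of `0` to the class of `s`. -/
theorem stmt7 (Z : ℝ → ℝ) (hZc : ContinuousOn Z (Set.Icc 0 1))
    (hZ0 : Z 0 = 0) (hZnn : ∀ t ∈ Set.Icc (0:ℝ) 1, 0 ≤ Z t)
    (D : ℝ → ℝ → ℝ)
    (hsymm : ∀ s t, D s t = D t s)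
    (hnn : ∀ s t, 0 ≤ D s t)
    (htri : ∀ r s t, D r t ≤ D r s + D s t)
    (hD0 : ∀ t ∈ Set.Icc (0:ℝ) 1, D 0 t = Z t)
    (hbound : ∀ s ∈ Set.Icc (0:ℝ) 1, ∀ t ∈ Set.Icc (0:ℝ) 1,
      D s t ≤ Z s + Z t - 2 * sInf (Z '' Set.Icc (min s t) (max s t)))
    (s : ℝ) (hs : s ∈ Set.Icc (0:ℝ) 1) (hZs : 0 < Z s)
    (φ : ℝ → ℝ)
    (hφ : ∀ t : ℝ, φ t = sSup {r : ℝ | 0 ≤ r ∧ r ≤ s ∧ Z r ≤ t}) :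
    (∀ t ∈ Set.Icc (0:ℝ) (Z s), Z (φ t) = t) ∧
    (∀ t t' : ℝ, 0 ≤ t → t ≤ t' → t' ≤ Z s → D (φ t) (φ t') = t' - t) := by
  obtain ⟨hs0, hs1⟩ := hs
  set A : ℝ → Set ℝ := fun t => {r : ℝ | 0 ≤ r ∧ r ≤ s ∧ Z r ≤ t} with hA_def
  have hmemA : ∀ t, 0 ≤ t → (0:ℝ) ∈ A t := fun t ht => ⟨le_refl 0, hs0, by rw [hZ0]; exact ht⟩
  have hAne : ∀ t, 0 ≤ t → (A t).Nonempty := fun t ht => ⟨0, hmemA t ht⟩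
  have hBdd : ∀ t, BddAbove (A t) := fun t => ⟨s, fun r hr => hr.2.1⟩
  have hφ0 : ∀ t, 0 ≤ t → 0 ≤ φ t := fun t ht => (hφ t) ▸ le_csSup (hBdd t) (hmemA t ht)
  have hφs : ∀ t, 0 ≤ t → φ t ≤ s := fun t ht =>
    (hφ t) ▸ csSup_le (hAne t ht) (fun r hr => hr.2.1)
  have hAclosed : ∀ t, IsClosed (A t) := by
    intro t
    have h1 : IsClosed (Set.Icc (0:ℝ) 1 ∩ Z ⁻¹' Set.Iic t) :=
      hZc.preimage_isClosed_of_isClosed isClosed_Icc isClosed_Iic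
    have h2 : A t = (Set.Icc (0:ℝ) 1 ∩ Z ⁻¹' Set.Iic t) ∩ Set.Icc 0 s := by
      ext r
      constructor
      · rintro ⟨ha, hb, hc⟩; exact ⟨⟨⟨ha, hb.trans hs1⟩, hc⟩, ha, hb⟩
      · rintro ⟨⟨⟨_, _⟩, hc⟩, hd, he⟩; exact ⟨hd, he, hc⟩
    rw [h2]; exact h1.inter isClosed_Icc
  have hφ_memA : ∀ t, 0 ≤ t → φ t ∈ A t := by
    intro t ht
    rw [hφ]
    exact (hAclosed t).csSup_mem (hAne t ht) (hBdd t)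
  have hZφle : ∀ t, 0 ≤ t → Z (φ t) ≤ t := fun t ht => (hφ_memA t ht).2.2
  have part1 : ∀ t, 0 ≤ t → t ≤ Z s → Z (φ t) = t := by
    intro t ht hts
    have hc : ContinuousOn Z (Set.Icc (φ t) s) :=
      hZc.mono (Set.Icc_subset_Icc (hφ0 t ht) hs1)
    obtain ⟨r, hr, hZr⟩ := intermediate_value_Icc (hφs t ht) hc ⟨hZφle t ht, hts⟩
    have hrA : r ∈ A t := ⟨(hφ0 t ht).trans hr.1, hr.2, le_of_eq hZr⟩
    have h1 : r ≤ φ t := (hφ t) ▸ le_csSup (hBdd t) hrA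
    have h2 : r = φ t := le_antisymm h1 hr.1
    rw [← h2, hZr]
  have hgt : ∀ t, 0 ≤ t → ∀ r, φ t < r → r ≤ s → t < Z r := by
    intro t ht r hr hrs
    by_contra h
    push_neg at h
    have hrA : r ∈ A t := ⟨((hφ0 t ht).trans hr.le), hrs, h⟩
    exact absurd ((hφ t) ▸ le_csSup (hBdd t) hrA) (not_le.mpr hr)
  refine ⟨fun t ht => part1 t ht.1 ht.2, ?_⟩
  intro t t' ht htt' ht's
  have ht'0 : 0 ≤ t' := ht.trans htt'
  have hab : φ t ≤ φ t' := by
    rw [hφ, hφ]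
    exact csSup_le_csSup (hBdd t') (hAne t ht) (fun r hr => ⟨hr.1, hr.2.1, hr.2.2.trans htt'⟩)
  have hZa : Z (φ t) = t := part1 t ht (htt'.trans ht's)
  have hZb : Z (φ t') = t' := part1 t' ht'0 ht's
  have ha1 : φ t ∈ Set.Icc (0:ℝ) 1 := ⟨hφ0 t ht, (hφs t ht).trans hs1⟩
  have hb1 : φ t' ∈ Set.Icc (0:ℝ) 1 := ⟨hφ0 t' ht'0, (hφs t' ht'0).trans hs1⟩
  have hlow : t' - t ≤ D (φ t) (φ t') := by
    have h1 : D 0 (φ t') ≤ D 0 (φ t) + D (φ t) (φ t') := htri 0 (φ t) (φ t')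
    rw [hD0 _ hb1, hD0 _ ha1, hZa, hZb] at h1
    linarith
  have hinf : t ≤ sInf (Z '' Set.Icc (φ t) (φ t')) := by
    apply le_csInf (Set.Nonempty.image _ (Set.nonempty_Icc.mpr hab))
    rintro x ⟨r, ⟨hr1, hr2⟩, rfl⟩
    rcases eq_or_lt_of_le hr1 with h | h
    · rw [← h, hZa]
    · exact (hgt t ht r h (hr2.trans (hφs t' ht'0))).le
  have hup : D (φ t) (φ t') ≤ t' - t := by
    have hb := hbound (φ t) ha1 (φ t') hb1
    rw [min_eq_left hab, max_eq_right hab, hZa, hZb] at hb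
    linarith
  exact le_antisymm hup hlow
end

section
/- Let (T, d) be a compact real tree coded by a continuous function g (T = T_g), and let a ∈ T with smallest preimage s(a) and largest preimage t(a) under p_g. Then the subtree of descendants T(a) = { b ∈ T : a ≺ b } equals p_g([s(a), t(a)]). -/
/-- in the tree coded by `g`, the subtree of descendants of the class of
`u` equals the image of `[s(a), t(a)]` where `s(a)`, `t(a)` are the smallest and
largest representatives of the class of `u`. Expressed through the pseudo-metric `d`:
the class of `v` is a descendant of the class of `u` (i.e.
`d(0,v) = d(0,u) + d(u,v)`) iff `v` is equivalent to some `r ∈ [s(a), t(a)]`. -/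
theorem stmt13 (σ : ℝ) (hσ : 0 < σ) (g : ℝ → ℝ)
    (hg : ContinuousOn g (Set.Icc 0 σ))
    (hnonneg : ∀ x ∈ Set.Icc (0:ℝ) σ, 0 ≤ g x)
    (h0 : g 0 = 0) (h1 : g σ = 0)
    (m : ℝ → ℝ → ℝ)
    (hm : ∀ s t : ℝ, m s t = sInf (g '' Set.Icc (min s t) (max s t)))
    (d : ℝ → ℝ → ℝ)
    (hd : ∀ s t : ℝ, d s t = g s + g t - 2 * m s t)
    (u : ℝ) (hu : u ∈ Set.Icc (0:ℝ) σ) :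
    ∀ v ∈ Set.Icc (0:ℝ) σ,
      (d 0 v = d 0 u + d u v ↔
        ∃ r ∈ Set.Icc (sInf {r : ℝ | r ∈ Set.Icc (0:ℝ) σ ∧ d u r = 0})
            (sSup {r : ℝ | r ∈ Set.Icc (0:ℝ) σ ∧ d u r = 0}),
          d v r = 0) := by
  intro v hv
  set S : Set ℝ := {r : ℝ | r ∈ Set.Icc (0:ℝ) σ ∧ d u r = 0} with hSdef
  -- basic facts about m
  have hbdd : ∀ a b : ℝ, a ∈ Set.Icc (0:ℝ) σ → b ∈ Set.Icc (0:ℝ) σ →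
      BddBelow (g '' Set.Icc (min a b) (max a b)) := by
    rintro a b ha hb
    refine ⟨0, ?_⟩
    rintro y ⟨x, hx, rfl⟩
    exact hnonneg x ⟨le_trans (le_min ha.1 hb.1) hx.1, le_trans hx.2 (max_le ha.2 hb.2)⟩
  have hmle : ∀ a b : ℝ, a ∈ Set.Icc (0:ℝ) σ → b ∈ Set.Icc (0:ℝ) σ →
      ∀ x ∈ Set.Icc (min a b) (max a b), m a b ≤ g x := by
    intro a b ha hb x hx
    rw [hm]
    exact csInf_le (hbdd a b ha hb) ⟨x, hx, rfl⟩
  have hmge : ∀ (a b c : ℝ), (∀ x ∈ Set.Icc (min a b) (max a b), c ≤ g x) → c ≤ m a b := by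
    intro a b c h
    rw [hm]
    refine le_csInf ⟨g a, a, ⟨min_le_left _ _, le_max_left _ _⟩, rfl⟩ ?_
    rintro y ⟨x, hx, rfl⟩; exact h x hx
  -- d from 0 is just g
  have hd0 : ∀ w ∈ Set.Icc (0:ℝ) σ, d 0 w = g w := by
    intro w hw
    have h1' : m 0 w ≤ g 0 :=
      hmle 0 w ⟨le_refl 0, hσ.le⟩ hw 0 ⟨min_le_left _ _, le_max_left _ _⟩
    have h2' : (0:ℝ) ≤ m 0 w := by
      refine hmge 0 w 0 ?_
      intro x hx
      rw [min_eq_left hw.1, max_eq_right hw.1] at hx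
      exact hnonneg x ⟨hx.1, hx.2.trans hw.2⟩
    have : m 0 w = 0 := le_antisymm (by rw [h0] at h1'; exact h1') h2'
    rw [hd, this, h0]; ring
  -- characterization of d u x = 0
  have hchar : ∀ x ∈ Set.Icc (0:ℝ) σ, (d u x = 0 ↔ g x = g u ∧ m u x = g u) := by
    intro x hx
    have h1' : m u x ≤ g u := hmle u x hu hx u ⟨min_le_left _ _, le_max_left _ _⟩
    have h2' : m u x ≤ g x := hmle u x hu hx x ⟨min_le_right _ _, le_max_right _ _⟩
    rw [hd]
    constructor
    · intro h; constructor <;> linarith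
    · rintro ⟨e1, e2⟩; linarith
  -- u ∈ S
  have hmuu : m u u = g u := by
    refine le_antisymm (hmle u u hu hu u ⟨min_le_left _ _, le_max_left _ _⟩) (hmge u u _ ?_)
    intro x hx
    rw [min_self, max_self] at hx
    have : x = u := le_antisymm hx.2 hx.1
    rw [this]
  have huS : u ∈ S := ⟨hu, (hchar u hu).2 ⟨rfl, hmuu⟩⟩
  have hSne : S.Nonempty := ⟨u, huS⟩
  have hSbb : BddBelow S := ⟨0, fun x hx => hx.1.1⟩
  have hSba : BddAbove S := ⟨σ, fun x hx => hx.1.2⟩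
  have hsu : sInf S ≤ u := csInf_le hSbb huS
  have hut : u ≤ sSup S := le_csSup hSba huS
  -- the closed set B
  have hBclosed : IsClosed {x : ℝ | x ∈ Set.Icc (0:ℝ) σ ∧ g u ≤ g x} := by
    have : {x : ℝ | x ∈ Set.Icc (0:ℝ) σ ∧ g u ≤ g x}
        = Set.Icc (0:ℝ) σ ∩ g ⁻¹' Set.Ici (g u) := by
      ext x; simp [Set.mem_Ici]
    rw [this]
    exact hg.preimage_isClosed_of_isClosed isClosed_Icc isClosed_Ici
  have hSB : S ⊆ {x : ℝ | x ∈ Set.Icc (0:ℝ) σ ∧ g u ≤ g x} := by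
    intro x hx
    exact ⟨hx.1, ((hchar x hx.1).1 hx.2).1.ge⟩
  have hclosB : closure S ⊆ {x : ℝ | x ∈ Set.Icc (0:ℝ) σ ∧ g u ≤ g x} :=
    hBclosed.closure_subset_iff.2 hSB
  have hsB : sInf S ∈ {x : ℝ | x ∈ Set.Icc (0:ℝ) σ ∧ g u ≤ g x} :=
    hclosB (csInf_mem_closure hSne hSbb)
  have htB : sSup S ∈ {x : ℝ | x ∈ Set.Icc (0:ℝ) σ ∧ g u ≤ g x} :=
    hclosB (csSup_mem_closure hSne hSba)
  -- g ≥ g u on [sInf S, sSup S]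
  have hge : ∀ x ∈ Set.Icc (sInf S) (sSup S), g u ≤ g x := by
    intro x hx
    rcases eq_or_lt_of_le hx.1 with h | h
    · rw [← h]; exact hsB.2
    rcases eq_or_lt_of_le hx.2 with h' | h'
    · rw [h']; exact htB.2
    rcases le_or_gt x u with hxu | hxu
    · obtain ⟨a, haS, hax⟩ := exists_lt_of_csInf_lt hSne h
      have h1' := hmle u a hu haS.1 x
        ⟨(min_le_right u a).trans hax.le, hxu.trans (le_max_left u a)⟩
      rwa [((hchar a haS.1).1 haS.2).2] at h1'
    · obtain ⟨b, hbS, hxb⟩ := exists_lt_of_lt_csSup hSne h'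
      have h1' := hmle u b hu hbS.1 x
        ⟨(min_le_left u b).trans hxu.le, hxb.le.trans (le_max_right u b)⟩
      rwa [((hchar b hbS.1).1 hbS.2).2] at h1'
  -- reformulate LHS
  have hL : (d 0 v = d 0 u + d u v) ↔ m u v = g u := by
    rw [hd0 v hv, hd0 u hu, hd u v]
    constructor <;> intro h <;> linarith
  rw [hL]
  constructor
  · -- forward: m u v = g u → v itself lies in [sInf S, sSup S]
    intro hmu
    have hguv : g u ≤ g v := by
      have := hmle u v hu hv v ⟨min_le_right _ _, le_max_right _ _⟩
      rwa [hmu] at this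
    have hvt : v ≤ sSup S := by
      rcases le_or_gt v u with hvu | huv
      · exact hvu.trans hut
      · set A := {x : ℝ | x ∈ Set.Icc v σ ∧ g x ≤ g u} with hAdef
        have hAσ : σ ∈ A := ⟨⟨hv.2, le_refl σ⟩, h1.le.trans (hnonneg u hu)⟩
        have hAclosed : IsClosed A := by
          have : A = Set.Icc v σ ∩ g ⁻¹' Set.Iic (g u) := by
            ext x; simp [hAdef, Set.mem_Iic]
          rw [this]
          exact (hg.mono (Set.Icc_subset_Icc_left hv.1)).preimage_isClosed_of_isClosed
            isClosed_Icc isClosed_Iic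
        have hAbb : BddBelow A := ⟨v, fun x hx => hx.1.1⟩
        set w := sInf A with hwdef
        have hwA : w ∈ A := hAclosed.csInf_mem ⟨σ, hAσ⟩ hAbb
        have hwIcc : w ∈ Set.Icc (0:ℝ) σ := ⟨hv.1.trans hwA.1.1, hwA.1.2⟩
        have hnotA : ∀ x ∈ Set.Ico v w, g u < g x := by
          intro x hx
          by_contra hc
          push_neg at hc
          have : w ≤ x := csInf_le hAbb ⟨⟨hx.1, hx.2.le.trans hwA.1.2⟩, hc⟩
          exact absurd hx.2 (not_lt.2 this)
        have hgw : g u ≤ g w := by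
          rcases eq_or_lt_of_le hwA.1.1 with hvw | hvw
          · rw [← hvw]; exact hguv
          · have hwcl : w ∈ closure (Set.Ico v w) := by
              rw [closure_Ico hvw.ne]
              exact ⟨hwA.1.1, le_refl w⟩
            have : Set.Ico v w ⊆ {x : ℝ | x ∈ Set.Icc (0:ℝ) σ ∧ g u ≤ g x} := by
              intro x hx
              exact ⟨⟨hv.1.trans hx.1, hx.2.le.trans hwA.1.2⟩, (hnotA x hx).le⟩
            exact (hBclosed.closure_subset_iff.2 this hwcl).2
        have hgw' : g w = g u := le_antisymm hwA.2 hgw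
        have hmw : m u w = g u := by
          refine le_antisymm (hmle u w hu hwIcc u ⟨min_le_left _ _, le_max_left _ _⟩)
            (hmge u w _ ?_)
          intro x hx
          have huw : u ≤ w := huv.le.trans hwA.1.1
          rw [min_eq_left huw, max_eq_right huw] at hx
          rcases le_or_gt x v with hxv | hxv
          · have := hmle u v hu hv x
              ⟨(min_le_left u v).trans hx.1, hxv.trans (le_max_right u v)⟩
            rwa [hmu] at this
          · rcases eq_or_lt_of_le hx.2 with hxw | hxw
            · rw [hxw, hgw']
            · exact (hnotA x ⟨hxv.le, hxw⟩).le
        have hwS : w ∈ S := ⟨hwIcc, (hchar w hwIcc).2 ⟨hgw', hmw⟩⟩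
        exact hwA.1.1.trans (le_csSup hSba hwS)
    have hsv : sInf S ≤ v := by
      rcases le_or_gt u v with huv | hvu
      · exact hsu.trans huv
      · set A := {x : ℝ | x ∈ Set.Icc (0:ℝ) v ∧ g x ≤ g u} with hAdef
        have hA0 : (0:ℝ) ∈ A := ⟨⟨le_refl 0, hv.1⟩, h0.le.trans (hnonneg u hu)⟩
        have hAclosed : IsClosed A := by
          have : A = Set.Icc (0:ℝ) v ∩ g ⁻¹' Set.Iic (g u) := by
            ext x; simp [hAdef, Set.mem_Iic]
          rw [this]
          exact (hg.mono (Set.Icc_subset_Icc_right hv.2)).preimage_isClosed_of_isClosed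
            isClosed_Icc isClosed_Iic
        have hAba : BddAbove A := ⟨v, fun x hx => hx.1.2⟩
        set w := sSup A with hwdef
        have hwA : w ∈ A := hAclosed.csSup_mem ⟨0, hA0⟩ hAba
        have hwIcc : w ∈ Set.Icc (0:ℝ) σ := ⟨hwA.1.1, hwA.1.2.trans hv.2⟩
        have hnotA : ∀ x ∈ Set.Ioc w v, g u < g x := by
          intro x hx
          by_contra hc
          push_neg at hc
          have : x ≤ w := le_csSup hAba ⟨⟨hwA.1.1.trans hx.1.le, hx.2⟩, hc⟩
          exact absurd hx.1 (not_lt.2 this)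
        have hgw : g u ≤ g w := by
          rcases eq_or_lt_of_le hwA.1.2 with hwv | hwv
          · rw [hwv]; exact hguv
          · have hwcl : w ∈ closure (Set.Ioc w v) := by
              rw [closure_Ioc hwv.ne]
              exact ⟨le_refl w, hwA.1.2⟩
            have : Set.Ioc w v ⊆ {x : ℝ | x ∈ Set.Icc (0:ℝ) σ ∧ g u ≤ g x} := by
              intro x hx
              exact ⟨⟨hwA.1.1.trans hx.1.le, hx.2.trans hv.2⟩, (hnotA x hx).le⟩
            exact (hBclosed.closure_subset_iff.2 this hwcl).2
        have hgw' : g w = g u := le_antisymm hwA.2 hgw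
        have hmw : m u w = g u := by
          refine le_antisymm (hmle u w hu hwIcc u ⟨min_le_left _ _, le_max_left _ _⟩)
            (hmge u w _ ?_)
          intro x hx
          have hwu : w ≤ u := hwA.1.2.trans hvu.le
          rw [min_eq_right hwu, max_eq_left hwu] at hx
          rcases le_or_gt v x with hvx | hvx
          · have := hmle u v hu hv x
              ⟨(min_le_right u v).trans hvx, hx.2.trans (le_max_left u v)⟩
            rwa [hmu] at this
          · rcases eq_or_lt_of_le hx.1 with hxw | hxw
            · rw [← hxw, hgw']
            · exact (hnotA x ⟨hxw, hvx.le⟩).le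
        have hwS : w ∈ S := ⟨hwIcc, (hchar w hwIcc).2 ⟨hgw', hmw⟩⟩
        exact (csInf_le hSbb hwS).trans hwA.1.2
    have hmvv : m v v = g v := by
      refine le_antisymm (hmle v v hv hv v ⟨min_le_left _ _, le_max_left _ _⟩) (hmge v v _ ?_)
      intro x hx
      rw [min_self, max_self] at hx
      have : x = v := le_antisymm hx.2 hx.1
      rw [this]
    refine ⟨v, ⟨hsv, hvt⟩, ?_⟩
    rw [hd, hmvv]; ring
  · -- backward
    rintro ⟨r, ⟨hsr, hrt⟩, hdvr⟩
    have hrIcc : r ∈ Set.Icc (0:ℝ) σ := ⟨hsB.1.1.trans hsr, hrt.trans htB.1.2⟩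
    have h1' : m v r ≤ g v := hmle v r hv hrIcc v ⟨min_le_left _ _, le_max_left _ _⟩
    have h2' : m v r ≤ g r := hmle v r hv hrIcc r ⟨min_le_right _ _, le_max_right _ _⟩
    rw [hd] at hdvr
    have hgr : g r = g v := by linarith
    have hmvr : m v r = g v := by linarith
    have hguv : g u ≤ g v := hgr ▸ hge r ⟨hsr, hrt⟩
    refine le_antisymm (hmle u v hu hv u ⟨min_le_left _ _, le_max_left _ _⟩) (hmge u v _ ?_)
    intro x hx
    rcases le_or_gt x (sSup S) with hx1 | hx1
    · rcases le_or_gt (sInf S) x with hx2 | hx2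
      · exact hge x ⟨hx2, hx1⟩
      · -- x < sInf S ≤ u, so v ≤ x
        have hxu : x < u := lt_of_lt_of_le hx2 hsu
        have hvx : v ≤ x := by
          rcases le_total u v with h | h
          · exfalso
            have := hx.1
            rw [min_eq_left h] at this
            linarith
          · have := hx.1
            rwa [min_eq_right h] at this
        have hxr : x ≤ r := hx2.le.trans hsr
        have := hmle v r hv hrIcc x ⟨(min_le_left v r).trans hvx, hxr.trans (le_max_right v r)⟩
        rw [hmvr] at this
        linarith
    · -- sSup S < x, so x ≤ v
      have hux : u < x := lt_of_le_of_lt hut hx1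
      have hxv : x ≤ v := by
        rcases le_total v u with h | h
        · exfalso
          have := hx.2
          rw [max_eq_left h] at this
          linarith
        · have := hx.2
          rwa [max_eq_right h] at this
      have hrx : r ≤ x := hrt.trans hx1.le
      have := hmle v r hv hrIcc x ⟨(min_le_right v r).trans hrx, hxv.trans (le_max_left v r)⟩
      rw [hmvr] at this
      linarith
end

section
/- Let g : [0,σ] → [0,∞) be continuous, vanishing exactly at 0 and σ, and not constant on any nontrivial interval. Then a vertex a ≠ ρ_g of T_g belongs to the skeleton Sk(T_g) (i.e. T_g \ {a} is disconnected) if and only if p_g^{-1}(a) is not a singleton; moreover the root ρ_g does not belong to Sk(T_g). -/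
/-- if `g` vanishes exactly at `0` and `σ` and is not constant on any
nontrivial interval, then a point `a ≠ ρ_g` of the tree `T_g` coded by `g` belongs
to the skeleton (`T_g \ {a}` disconnected) iff `a` has more than one preimage under
`p_g`; moreover the root is not in the skeleton. -/
theorem stmt14 (σ : ℝ) (hσ : 0 < σ) (g : ℝ → ℝ)
    (hg : ContinuousOn g (Set.Icc 0 σ))
    (h0 : g 0 = 0) (h1 : g σ = 0)
    (hpos : ∀ x ∈ Set.Ioo (0:ℝ) σ, 0 < g x)
    (hnotconst : ∀ u v : ℝ, 0 ≤ u → u < v → v ≤ σ →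
      ∃ x ∈ Set.Icc u v, ∃ y ∈ Set.Icc u v, g x ≠ g y)
    (m : ℝ → ℝ → ℝ)
    (hm : ∀ s t : ℝ, m s t = sInf (g '' Set.Icc (min s t) (max s t)))
    (d : ℝ → ℝ → ℝ)
    (hd : ∀ s t : ℝ, d s t = g s + g t - 2 * m s t)
    (T : Type*) [MetricSpace T] (p : ℝ → T)
    (hsurj : ∀ x : T, ∃ s ∈ Set.Icc (0:ℝ) σ, p s = x)
    (hiso : ∀ s ∈ Set.Icc (0:ℝ) σ, ∀ t ∈ Set.Icc (0:ℝ) σ, dist (p s) (p t) = d s t) :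
    (∀ a : T, a ≠ p 0 →
      (¬ IsConnected ({a}ᶜ : Set T) ↔
        ∃ s ∈ Set.Icc (0:ℝ) σ, ∃ t ∈ Set.Icc (0:ℝ) σ, s ≠ t ∧ p s = a ∧ p t = a)) ∧
    IsConnected (({p 0}ᶜ : Set T)) := by
  have hgnn : ∀ x ∈ Set.Icc (0:ℝ) σ, 0 ≤ g x := by
    intro x hx
    rcases eq_or_lt_of_le hx.1 with h | h
    · simp [← h, h0]
    rcases eq_or_lt_of_le hx.2 with h' | h'
    · simp [h', h1]
    · exact (hpos x ⟨h, h'⟩).le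
  have hdd : ∀ s t : ℝ, s ≤ t → d s t = g s + g t - 2 * sInf (g '' Set.Icc s t) := by
    intro s t hst
    rw [hd, hm, min_eq_left hst, max_eq_right hst]
  have hsub : ∀ s t : ℝ, 0 ≤ s → t ≤ σ → Set.Icc s t ⊆ Set.Icc 0 σ := by
    intro s t hh1 hh2 x hx; exact ⟨hh1.trans hx.1, hx.2.trans hh2⟩
  have hbdd : ∀ s t : ℝ, 0 ≤ s → t ≤ σ → BddBelow (g '' Set.Icc s t) := by
    intro s t hh1 hh2
    refine ⟨0, ?_⟩
    rintro y ⟨x, hx, rfl⟩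
    exact hgnn x (hsub s t hh1 hh2 hx)
  have hMle : ∀ s t x : ℝ, 0 ≤ s → t ≤ σ → x ∈ Set.Icc s t →
      sInf (g '' Set.Icc s t) ≤ g x := by
    intro s t x hh1 hh2 hx
    exact csInf_le (hbdd s t hh1 hh2) ⟨x, hx, rfl⟩
  have hMmem : ∀ s t : ℝ, 0 ≤ s → s ≤ t → t ≤ σ →
      ∃ w ∈ Set.Icc s t, g w = sInf (g '' Set.Icc s t) := by
    intro s t h0s hst htσ
    have hc : IsCompact (g '' Set.Icc s t) :=
      isCompact_Icc.image_of_continuousOn (hg.mono (hsub s t h0s htσ))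
    have hne : (g '' Set.Icc s t).Nonempty := ⟨g s, s, ⟨le_refl s, hst⟩, rfl⟩
    obtain ⟨w, hw, hwe⟩ := hc.sInf_mem hne
    exact ⟨w, hw, hwe⟩
  -- distance formula for s ≤ t, both in Icc
  have hdist : ∀ s t : ℝ, s ∈ Set.Icc (0:ℝ) σ → t ∈ Set.Icc (0:ℝ) σ → s ≤ t →
      dist (p s) (p t) = g s + g t - 2 * sInf (g '' Set.Icc s t) := by
    intro s t hs ht hst
    rw [hiso s hs t ht, hdd s t hst]
  -- sInf over [0, u] is 0 for u ∈ Icc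
  have hM0 : ∀ u : ℝ, 0 ≤ u → u ≤ σ → sInf (g '' Set.Icc 0 u) = 0 := by
    intro u h0u huσ
    refine le_antisymm ?_ ?_
    · have := hMle 0 u 0 le_rfl huσ ⟨le_rfl, h0u⟩
      simpa [h0] using this
    · refine le_csInf ⟨g 0, 0, ⟨le_rfl, h0u⟩, rfl⟩ ?_
      rintro y ⟨x, hx, rfl⟩
      exact hgnn x (hsub 0 u le_rfl huσ hx)
  have hp0σ : p σ = p 0 := by
    have : dist (p 0) (p σ) = 0 := by
      rw [hdist 0 σ ⟨le_rfl, hσ.le⟩ ⟨hσ.le, le_rfl⟩ hσ.le, hM0 σ hσ.le le_rfl, h0, h1]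
      ring
    exact (dist_eq_zero.mp this).symm
  have hroot : ∀ u ∈ Set.Ioo (0:ℝ) σ, p u ≠ p 0 := by
    intro u hu he
    have : dist (p 0) (p u) = 0 := by rw [he]; simp
    rw [hdist 0 u ⟨le_rfl, hσ.le⟩ ⟨hu.1.le, hu.2.le⟩ hu.1.le,
      hM0 u hu.1.le hu.2.le, h0] at this
    have := hpos u hu
    linarith
  -- points mapping to p 0 must be 0 or σ
  have hrootpre : ∀ u ∈ Set.Icc (0:ℝ) σ, p u = p 0 → u = 0 ∨ u = σ := by
    intro u hu he
    by_contra hc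
    push_neg at hc
    exact hroot u ⟨lt_of_le_of_ne hu.1 (Ne.symm hc.1), lt_of_le_of_ne hu.2 hc.2⟩ he
  -- continuity of p on [0, σ]
  have hpcont : ContinuousOn p (Set.Icc 0 σ) := by
    rw [Metric.continuousOn_iff]
    intro b hb ε hε
    obtain ⟨δ, hδ, hδ'⟩ := Metric.continuousWithinAt_iff.mp (hg b hb) (ε / 3) (by positivity)
    refine ⟨δ, hδ, ?_⟩
    intro t ht hdtb
    rcases le_total t b with hle | hle
    · obtain ⟨w, hw, hwe⟩ := hMmem t b ht.1 hle hb.2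
      have hwI : w ∈ Set.Icc (0:ℝ) σ := hsub t b ht.1 hb.2 hw
      have hdwb : dist w b < δ := by
        rw [Real.dist_eq] at hdtb ⊢
        rw [abs_lt] at hdtb ⊢
        constructor <;> linarith [hw.1, hw.2, hdtb.1, hdtb.2]
      have h1' := hδ' ht hdtb
      have h2' := hδ' hwI hdwb
      rw [Real.dist_eq, abs_lt] at h1' h2'
      rw [hdist t b ht hb hle, ← hwe]
      have := abs_nonneg (g t - g b)
      linarith
    · obtain ⟨w, hw, hwe⟩ := hMmem b t hb.1 hle ht.2
      have hwI : w ∈ Set.Icc (0:ℝ) σ := hsub b t hb.1 ht.2 hw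
      have hdwb : dist w b < δ := by
        rw [Real.dist_eq] at hdtb ⊢
        rw [abs_lt] at hdtb ⊢
        constructor <;> linarith [hw.1, hw.2, hdtb.1, hdtb.2]
      have h1' := hδ' ht hdtb
      have h2' := hδ' hwI hdwb
      rw [Real.dist_eq, abs_lt] at h1' h2'
      have : dist (p t) (p b) = dist (p b) (p t) := dist_comm _ _
      rw [this, hdist b t hb ht hle, ← hwe]
      linarith
  -- KEY 1: unique preimage (interior) implies connected complement
  have keyconn : ∀ (a : T) (s : ℝ), s ∈ Set.Ioo (0:ℝ) σ → p s = a →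
      (∀ u ∈ Set.Icc (0:ℝ) σ, p u = a → u = s) → IsConnected ({a}ᶜ : Set T) := by
    intro a s hs hps huniq
    have hset : ({a}ᶜ : Set T) = p '' Set.Ico 0 s ∪ p '' Set.Ioc s σ := by
      ext x
      simp only [Set.mem_compl_iff, Set.mem_singleton_iff, Set.mem_union, Set.mem_image]
      constructor
      · intro hx
        obtain ⟨u, hu, rfl⟩ := hsurj x
        have hus : u ≠ s := fun h => hx (h ▸ hps)
        rcases lt_or_gt_of_ne hus with h | h
        · exact Or.inl ⟨u, ⟨hu.1, h⟩, rfl⟩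
        · exact Or.inr ⟨u, ⟨h, hu.2⟩, rfl⟩
      · rintro (⟨u, hu, rfl⟩ | ⟨u, hu, rfl⟩) he
        · exact absurd (huniq u ⟨hu.1, hu.2.le.trans hs.2.le⟩ he) (ne_of_lt hu.2)
        · exact absurd (huniq u ⟨hs.1.le.trans hu.1.le, hu.2⟩ he) (ne_of_gt hu.1)
    rw [hset]
    refine IsConnected.union ⟨p 0, ⟨0, ⟨le_rfl, hs.1⟩, rfl⟩, ⟨σ, ⟨hs.2, le_rfl⟩, hp0σ⟩⟩ ?_ ?_
    · have hc1 : IsConnected (Set.Ico (0:ℝ) s) := ⟨⟨0, ⟨le_rfl, hs.1⟩⟩, isPreconnected_Ico⟩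
      exact hc1.image p (hpcont.mono (fun x hx => ⟨hx.1, hx.2.le.trans hs.2.le⟩))
    · have hc2 : IsConnected (Set.Ioc s σ) := ⟨⟨σ, ⟨hs.2, le_rfl⟩⟩, isPreconnected_Ioc⟩
      exact hc2.image p (hpcont.mono (fun x hx => ⟨hs.1.le.trans hx.1.le, hx.2⟩))
  -- KEY 2: two preimages (a ≠ root) implies disconnected complement
  have keydisc : ∀ (a : T), a ≠ p 0 → ∀ s t : ℝ, s ∈ Set.Icc (0:ℝ) σ →
      t ∈ Set.Icc (0:ℝ) σ → s < t → p s = a → p t = a →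
      ¬ IsConnected ({a}ᶜ : Set T) := by
    intro a ha s t hs ht hst hps hpt hconn
    have hs0 : 0 < s := by
      rcases eq_or_lt_of_le hs.1 with h | h
      · exfalso; apply ha; rw [← hps, ← h]
      · exact h
    have htσ : t < σ := by
      rcases eq_or_lt_of_le ht.2 with h | h
      · exfalso; apply ha; rw [← hpt, h, hp0σ]
      · exact h
    set M := sInf (g '' Set.Icc s t) with hMdef
    have hd0 : g s + g t - 2 * M = 0 := by
      have : dist (p s) (p t) = 0 := by rw [hps, hpt]; simp
      rw [hdist s t hs ht hst.le] at this
      linarith [this]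
    have hMs : M ≤ g s := hMle s t s hs.1 ht.2 ⟨le_rfl, hst.le⟩
    have hMt : M ≤ g t := hMle s t t hs.1 ht.2 ⟨hst.le, le_rfl⟩
    have hgs : g s = M := by linarith
    have hgt : g t = M := by linarith
    -- find u ∈ [s,t] with g u > M
    obtain ⟨x, hx, y, hy, hxy⟩ := hnotconst s t hs.1 hst ht.2
    have hgx : M ≤ g x := hMle s t x hs.1 ht.2 hx
    have hgy : M ≤ g y := hMle s t y hs.1 ht.2 hy
    obtain ⟨u, hu, hgu⟩ : ∃ u ∈ Set.Icc s t, M < g u := by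
      rcases lt_or_eq_of_le hgx with h | h
      · exact ⟨x, hx, h⟩
      · refine ⟨y, hy, lt_of_le_of_ne hgy ?_⟩
        intro he; exact hxy (h.symm.trans he)
    have huI : u ∈ Set.Icc (0:ℝ) σ := hsub s t hs.1 ht.2 hu
    -- p u ≠ a
    have hpua : p u ≠ a := by
      intro he
      have : dist (p s) (p u) = 0 := by rw [hps, he]; simp
      rw [hdist s u hs huI hu.1] at this
      have := hMle s u s hs.1 huI.2 ⟨le_rfl, hu.1⟩
      rw [hgs] at this
      linarith
    set F1 := p '' Set.Icc s t with hF1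
    set F2 := p '' Set.Icc 0 s ∪ p '' Set.Icc t σ with hF2
    have hF1c : IsClosed F1 :=
      (isCompact_Icc.image_of_continuousOn (hpcont.mono (hsub s t hs.1 ht.2))).isClosed
    have hF2c : IsClosed F2 := by
      refine IsClosed.union ?_ ?_
      · exact (isCompact_Icc.image_of_continuousOn
          (hpcont.mono (hsub 0 s le_rfl hs.2))).isClosed
      · exact (isCompact_Icc.image_of_continuousOn
          (hpcont.mono (hsub t σ ht.1 le_rfl))).isClosed
    have hcover : ({a}ᶜ : Set T) ⊆ F1 ∪ F2 := by
      intro x _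
      obtain ⟨v, hv, rfl⟩ := hsurj x
      rcases le_total v s with h | h
      · exact Or.inr (Or.inl ⟨v, ⟨hv.1, h⟩, rfl⟩)
      rcases le_total v t with h' | h'
      · exact Or.inl ⟨v, ⟨h, h'⟩, rfl⟩
      · exact Or.inr (Or.inr ⟨v, ⟨h', hv.2⟩, rfl⟩)
    have hne1 : (({a}ᶜ : Set T) ∩ F1).Nonempty := ⟨p u, hpua, ⟨u, hu, rfl⟩⟩
    have hne2 : (({a}ᶜ : Set T) ∩ F2).Nonempty :=
      ⟨p 0, Ne.symm ha, Or.inl ⟨0, ⟨le_rfl, hs0.le⟩, rfl⟩⟩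
    obtain ⟨x, hxa, hx1, hx2⟩ :=
      isPreconnected_closed_iff.mp hconn.isPreconnected F1 F2 hF1c hF2c hcover hne1 hne2
    -- derive contradiction: x ∈ F1 ∩ F2 and x ≠ a is impossible
    obtain ⟨v, hv, rfl⟩ := hx1
    -- g v = M and then p v = a
    have hvI : v ∈ Set.Icc (0:ℝ) σ := hsub s t hs.1 ht.2 hv
    have hgvM : M ≤ g v := hMle s t v hs.1 ht.2 hv
    have hgv : g v = M := by
      rcases hx2 with ⟨w, hw, hwe⟩ | ⟨w, hw, hwe⟩
      · -- w ∈ [0,s], p w = p v, w ≤ s ≤ v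
        have hwI : w ∈ Set.Icc (0:ℝ) σ := hsub 0 s le_rfl hs.2 hw
        have hwv : w ≤ v := hw.2.trans hv.1
        have hdwv : dist (p w) (p v) = 0 := by rw [hwe]; simp
        rw [hdist w v hwI hvI hwv] at hdwv
        have hMwv1 : sInf (g '' Set.Icc w v) ≤ g s :=
          hMle w v s hwI.1 hvI.2 ⟨hw.2, hv.1⟩
        have hMwv2 : sInf (g '' Set.Icc w v) ≤ g w :=
          hMle w v w hwI.1 hvI.2 ⟨le_rfl, hwv⟩
        rw [hgs] at hMwv1
        linarith
      · -- w ∈ [t,σ], p w = p v, v ≤ t ≤ w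
        have hwI : w ∈ Set.Icc (0:ℝ) σ := hsub t σ ht.1 le_rfl hw
        have hvw : v ≤ w := hv.2.trans hw.1
        have hdvw : dist (p v) (p w) = 0 := by rw [hwe]; simp
        rw [hdist v w hvI hwI hvw] at hdvw
        have hMvw1 : sInf (g '' Set.Icc v w) ≤ g t :=
          hMle v w t hvI.1 hwI.2 ⟨hv.2, hw.1⟩
        have hMvw2 : sInf (g '' Set.Icc v w) ≤ g w :=
          hMle v w w hvI.1 hwI.2 ⟨hvw, le_rfl⟩
        rw [hgt] at hMvw1
        linarith
    -- now show p v = a, contradicting hxa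
    apply hxa
    have hdsv : dist (p s) (p v) = 0 := by
      rw [hdist s v hs hvI hv.1]
      obtain ⟨w, hw, hwe⟩ := hMmem s v hs.1 hv.1 hvI.2
      have : M ≤ g w := hMle s t w hs.1 ht.2 ⟨hw.1, hw.2.trans hv.2⟩
      have h2 : sInf (g '' Set.Icc s v) ≤ g s := hMle s v s hs.1 hvI.2 ⟨le_rfl, hv.1⟩
      rw [hwe] at this
      rw [hgs] at h2
      linarith
    rw [← hps]
    exact (dist_eq_zero.mp hdsv).symm
  constructor
  · intro a ha
    constructor
    · intro hdisc
      by_contra hno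
      push_neg at hno
      apply hdisc
      obtain ⟨s, hs, hps⟩ := hsurj a
      have hs0 : s ≠ 0 := by
        intro h; apply ha; rw [← hps, h]
      have hsσ : s ≠ σ := by
        intro h; apply ha; rw [← hps, h, hp0σ]
      refine keyconn a s ⟨lt_of_le_of_ne hs.1 (Ne.symm hs0), lt_of_le_of_ne hs.2 hsσ⟩ hps ?_
      intro u hu hpu
      by_contra hus
      exact (hno s hs u hu (Ne.symm hus) hps) hpu
    · rintro ⟨s, hs, t, ht, hst, hps, hpt⟩
      rcases lt_or_gt_of_ne hst with h | h
      · exact keydisc a ha s t hs ht h hps hpt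
      · exact keydisc a ha t s ht hs h hpt hps
  · -- root: complement is p '' Ioo 0 σ, connected
    have hset : ({p 0}ᶜ : Set T) = p '' Set.Ioo 0 σ := by
      ext x
      simp only [Set.mem_compl_iff, Set.mem_singleton_iff, Set.mem_image]
      constructor
      · intro hx
        obtain ⟨u, hu, rfl⟩ := hsurj x
        have hu0 : u ≠ 0 := fun h => hx (by rw [h])
        have huσ : u ≠ σ := fun h => hx (by rw [h, hp0σ])
        exact ⟨u, ⟨lt_of_le_of_ne hu.1 (Ne.symm hu0), lt_of_le_of_ne hu.2 huσ⟩, rfl⟩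
      · rintro ⟨u, hu, rfl⟩
        exact hroot u hu
    rw [hset]
    exact (isConnected_Ioo hσ).image p (hpcont.mono Set.Ioo_subset_Icc_self)
end

section
/- Let Z : [0,1] → [0,∞) be continuous with Z_0 = Z_1 = 0 and Z_t > 0 for t ∈ (0,1). For η > 0, choose ε > 0 such that Z_s < η for all s ∈ [0,ε] ∪ [1−ε,1], and set α = inf_{s ∈ [ε, 1−ε]} Z_s > 0. Then for any r, r' ∈ [0,1] with Z_r ≥ η and Z_{r'} ≥ η, the functions φ_r and φ_{r'} (where φ_u(t) = sup{ v ≤ u : Z_v ≤ t }) satisfy φ_r(t) = φ_{r'}(t) for all t ∈ [0, α). -/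
/-- coalescence of simple geodesics near the root. With
`α = inf_{[ε,1-ε]} Z > 0`, any two points `r, r'` with `Z_r ≥ η` and `Z_{r'} ≥ η`
have `φ_r(t) = φ_{r'}(t)` for all `t ∈ [0,α)`. -/
theorem stmt19 (Z : ℝ → ℝ) (hZc : ContinuousOn Z (Set.Icc 0 1))
    (hZ0 : Z 0 = 0) (hZ1 : Z 1 = 0)
    (hZpos : ∀ t ∈ Set.Ioo (0:ℝ) 1, 0 < Z t)
    (η ε : ℝ) (hη : 0 < η) (hε : 0 < ε) (hεhalf : ε < 1/2)
    (hsmall : ∀ s ∈ Set.Icc (0:ℝ) 1,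
      s ∈ Set.Icc (0:ℝ) ε ∪ Set.Icc (1-ε) 1 → Z s < η)
    (α : ℝ) (hα : α = sInf (Z '' Set.Icc ε (1-ε)))
    (r r' : ℝ) (hr : r ∈ Set.Icc (0:ℝ) 1) (hr' : r' ∈ Set.Icc (0:ℝ) 1)
    (hZr : η ≤ Z r) (hZr' : η ≤ Z r') :
    0 < α ∧ ∀ t : ℝ, 0 ≤ t → t < α →
      sSup {v : ℝ | 0 ≤ v ∧ v ≤ r ∧ Z v ≤ t} =
        sSup {v : ℝ | 0 ≤ v ∧ v ≤ r' ∧ Z v ≤ t} := by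
  have h01 : ε ≤ 1 - ε := by linarith
  have hne : (Set.Icc ε (1-ε)).Nonempty := ⟨ε, le_refl _, h01⟩
  have hsub : Set.Icc ε (1-ε) ⊆ Set.Icc (0:ℝ) 1 :=
    Set.Icc_subset_Icc (by linarith) (by linarith)
  obtain ⟨x, hx, hmin⟩ := isCompact_Icc.exists_isMinOn hne (hZc.mono hsub)
  have hαx : α = Z x := by
    rw [hα]
    exact IsLeast.csInf_eq ⟨⟨x, hx, rfl⟩, fun y ⟨v, hv, hvy⟩ => hvy ▸ hmin hv⟩
  have hαpos : 0 < α := by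
    rw [hαx]
    exact hZpos x ⟨lt_of_lt_of_le hε hx.1, lt_of_le_of_lt hx.2 (by linarith)⟩
  have hαle : ∀ v ∈ Set.Icc ε (1-ε), α ≤ Z v := fun v hv => hαx ▸ hmin hv
  have hrmem : ∀ s ∈ Set.Icc (0:ℝ) 1, η ≤ Z s → ε ≤ s ∧ s ≤ 1 - ε := by
    intro s hs hZs
    constructor
    · by_contra h
      exact absurd (hsmall s hs (Or.inl ⟨hs.1, le_of_not_ge h⟩)) (not_lt.2 hZs)
    · by_contra h
      exact absurd (hsmall s hs (Or.inr ⟨le_of_not_ge h, hs.2⟩)) (not_lt.2 hZs)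
  refine ⟨hαpos, fun t ht htα => ?_⟩
  have key : ∀ s : ℝ, ε ≤ s → s ≤ 1 - ε →
      {v : ℝ | 0 ≤ v ∧ v ≤ s ∧ Z v ≤ t} = {v : ℝ | 0 ≤ v ∧ v ≤ ε ∧ Z v ≤ t} := by
    intro s hs1 hs2
    ext v
    simp only [Set.mem_setOf_eq]
    constructor
    · rintro ⟨h0, hvs, hvt⟩
      refine ⟨h0, ?_, hvt⟩
      by_contra h
      have : α ≤ Z v := hαle v ⟨le_of_not_ge h, le_trans hvs hs2⟩
      linarith
    · rintro ⟨h0, hvε, hvt⟩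
      exact ⟨h0, le_trans hvε hs1, hvt⟩
  rw [key r (hrmem r hr hZr).1 (hrmem r hr hZr).2,
    key r' (hrmem r' hr' hZr').1 (hrmem r' hr' hZr').2]
end
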